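/- (Corollary 1 of the paper.) With the setting of the reflected branching process and y a positive integer, if {Λ_{n,j}^1}_{1≤j≤y} are conditionally i.i.d. copies of Λ_n^1 given {J_i}_{1≤i≤n}, then Λ_n^y is stochastically dominated by Σ_{j=1}^{y} Λ_{n,j}^1; consequently P[Λ_n^l > x] ≥ P[Λ_n^y > y x] / y for any integers y ≥ 1, l ≥ 1 and real x. -/

import Mathlib

open MeasureTheory ProbabilityTheory

namespace Stmt17Aux

/-- Coupled copies of the barrier-1 process, copy `j` reading a contiguous block
of increments starting after the blocks of copies `0, …, j-1`. -/
def BV {Ω : Type*} (B : ℕ → ℕ → Ω → ℕ) : ℕ → Ω → ℕ → ℕ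
  | 0, _, _ => 1
  | (n+1), ω, j =>
      max (∑ i ∈ Finset.Ico (∑ k ∈ Finset.range j, BV B n ω k)
            ((∑ k ∈ Finset.range j, BV B n ω k) + BV B n ω j), B n i ω) 1

lemma BV_pos {Ω : Type*} (B : ℕ → ℕ → Ω → ℕ) (n : ℕ) (ω : Ω) (j : ℕ) :
    1 ≤ BV B n ω j := by
  cases n with
  | zero => simp [BV]
  | succ n => exact le_max_right _ _

lemma measurable_nat_elim {Ω ι β : Type*} [Countable ι] [MeasurableSpace ι]
    [MeasurableSingletonClass ι] [MeasurableSpace β] {m' : MeasurableSpace Ω}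
    {f : Ω → ι} {h : ι → Ω → β} (hf : Measurable[m'] f)
    (hh : ∀ a, Measurable[m'] (h a)) : Measurable[m'] fun ω => h (f ω) ω := by
  intro s hs
  have : (fun ω => h (f ω) ω) ⁻¹' s = ⋃ a, f ⁻¹' {a} ∩ h a ⁻¹' s := by
    ext ω
    simp only [Set.mem_preimage, Set.mem_iUnion, Set.mem_inter_iff, Set.mem_singleton_iff]
    constructor
    · intro hs; exact ⟨f ω, rfl, hs⟩
    · rintro ⟨a, ha, hmem⟩; rw [ha]; exact hmem
  rw [this]
  exact MeasurableSet.iUnion fun a => (hf (measurableSet_singleton a)).inter (hh a hs)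

lemma measurable_BV {Ω : Type*} {m' : MeasurableSpace Ω} (B : ℕ → ℕ → Ω → ℕ) (n : ℕ)
    (hB : ∀ m i, m < n → Measurable[m'] (B m i)) :
    ∀ j, Measurable[m'] fun ω => BV B n ω j := by
  induction n with
  | zero => intro j; simp only [BV]; exact measurable_const
  | succ n ih =>
    intro j
    have ih' : ∀ j, Measurable[m'] fun ω => BV B n ω j :=
      ih (fun m i hm => hB m i (hm.trans (Nat.lt_succ_self n)))
    have ha : Measurable[m'] fun ω => ∑ k ∈ Finset.range j, BV B n ω k :=
      Finset.measurable_sum _ (fun k _ => ih' k)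
    have hf : Measurable[m'] fun ω =>
        ((∑ k ∈ Finset.range j, BV B n ω k, BV B n ω j) : ℕ × ℕ) :=
      ha.prodMk (ih' j)
    have := measurable_nat_elim (m' := m') hf
      (h := fun p ω => max (∑ i ∈ Finset.Ico p.1 (p.1 + p.2), B n i ω) 1)
      (fun p => (Finset.measurable_sum _
        (fun i _ => hB n i (Nat.lt_succ_self n))).max measurable_const)
    exact this

end Stmt17Aux

namespace Stmt17Aux

lemma sum_split (c f : ℕ → ℕ) (y : ℕ) :
    ∑ i ∈ Finset.range (∑ j ∈ Finset.range y, c j), f i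
      = ∑ j ∈ Finset.range y,
          ∑ i ∈ Finset.Ico (∑ k ∈ Finset.range j, c k)
            ((∑ k ∈ Finset.range j, c k) + c j), f i := by
  induction y with
  | zero => simp
  | succ y ih =>
    rw [Finset.sum_range_succ (f := c), Finset.sum_range_succ
      (f := fun j => ∑ i ∈ Finset.Ico (∑ k ∈ Finset.range j, c k)
        ((∑ k ∈ Finset.range j, c k) + c j), f i), ← ih]
    rw [Finset.range_eq_Ico,
      ← Finset.sum_Ico_consecutive f (Nat.zero_le (∑ k ∈ Finset.range y, c k))
        (Nat.le_add_right _ (c y)), ← Finset.range_eq_Ico]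

lemma dom_y {Ω : Type*} (B : ℕ → ℕ → Ω → ℕ) (y : ℕ) (Λy : ℕ → Ω → ℕ)
    (h0y : ∀ ω, Λy 0 ω = y)
    (hrecy : ∀ (n : ℕ) ω, Λy (n + 1) ω = max (∑ i ∈ Finset.range (Λy n ω), B n i ω) y)
    (n : ℕ) (ω : Ω) : Λy n ω ≤ ∑ j ∈ Finset.range y, BV B n ω j := by
  induction n with
  | zero => simp [h0y, BV]
  | succ n ih =>
    rw [hrecy]
    apply max_le
    · calc ∑ i ∈ Finset.range (Λy n ω), B n i ω
          ≤ ∑ i ∈ Finset.range (∑ j ∈ Finset.range y, BV B n ω j), B n i ω := by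
            apply Finset.sum_le_sum_of_subset
            exact Finset.range_subset_range.2 ih
        _ = ∑ j ∈ Finset.range y,
              ∑ i ∈ Finset.Ico (∑ k ∈ Finset.range j, BV B n ω k)
                ((∑ k ∈ Finset.range j, BV B n ω k) + BV B n ω j), B n i ω :=
            sum_split _ _ _
        _ ≤ ∑ j ∈ Finset.range y, BV B (n+1) ω j :=
            Finset.sum_le_sum (fun j _ => le_max_left _ _)
    · calc y = ∑ _j ∈ Finset.range y, 1 := by simp
        _ ≤ ∑ j ∈ Finset.range y, BV B (n+1) ω j :=
            Finset.sum_le_sum (fun j _ => BV_pos B (n+1) ω j)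

lemma dom_l {Ω : Type*} (B : ℕ → ℕ → Ω → ℕ) (l : ℕ) (hl : 1 ≤ l) (Λl : ℕ → Ω → ℕ)
    (h0l : ∀ ω, Λl 0 ω = l)
    (hrecl : ∀ (n : ℕ) ω, Λl (n + 1) ω = max (∑ i ∈ Finset.range (Λl n ω), B n i ω) l)
    (n : ℕ) (ω : Ω) : BV B n ω 0 ≤ Λl n ω := by
  induction n with
  | zero => simpa [BV, h0l] using hl
  | succ n ih =>
    rw [hrecl]
    show max (∑ i ∈ Finset.Ico (∑ k ∈ Finset.range 0, BV B n ω k)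
        ((∑ k ∈ Finset.range 0, BV B n ω k) + BV B n ω 0), B n i ω) 1 ≤ _
    simp only [Finset.range_zero, Finset.sum_empty, zero_add]
    apply max_le
    · refine le_trans ?_ (le_max_left _ l)
      rw [← Finset.range_eq_Ico]
      exact Finset.sum_le_sum_of_subset (Finset.range_subset_range.2 ih)
    · exact hl.trans (le_max_right _ _)

end Stmt17Aux

namespace Stmt17Aux

/-- pmf of a sum of a r.v. and an independent increment. -/
lemma add_pmf {Ω : Type*} [MeasurableSpace Ω] (P : Measure Ω)
    (B : ℕ → ℕ → Ω → ℕ) (hBm : ∀ n i, Measurable (B n i))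
    (ν : ℕ → Measure ℕ) (hBd : ∀ n i, Measure.map (B n i) P = ν n)
    {S : Ω → ℕ} (hS : Measurable S) {n i : ℕ}
    (hI : IndepFun S (B n i) P) (t : ℕ) :
    P {ω | S ω + B n i ω = t}
      = ∑ a ∈ Finset.range (t + 1), P {ω | S ω = a} * ν n {t - a} := by
  have hBpmf : ∀ b : ℕ, P (B n i ⁻¹' {b}) = ν n {b} := by
    intro b
    rw [← hBd n i, Measure.map_apply (hBm n i) (measurableSet_singleton b)]
  have hset : {ω | S ω + B n i ω = t}
      = ⋃ a ∈ Finset.range (t + 1), (S ⁻¹' {a} ∩ B n i ⁻¹' {t - a}) := by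
    ext ω
    simp only [Set.mem_setOf_eq, Set.mem_iUnion, Set.mem_inter_iff, Set.mem_preimage,
      Set.mem_singleton_iff, Finset.mem_range]
    constructor
    · intro h
      exact ⟨S ω, by omega, rfl, by omega⟩
    · rintro ⟨a, ha, rfl, hb⟩
      omega
  rw [hset, measure_biUnion_finset]
  · refine Finset.sum_congr rfl (fun a _ => ?_)
    rw [hI.measure_inter_preimage_eq_mul _ _ (measurableSet_singleton a)
      (measurableSet_singleton (t - a)), hBpmf]
    rfl
  · intro a _ b _ hab
    refine Set.disjoint_left.2 (fun ω hωa hωb => hab ?_)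
    have h1 : S ω = a := hωa.1
    have h2 : S ω = b := hωb.1
    omega
  · intro a _
    exact (hS (measurableSet_singleton a)).inter (hBm n i (measurableSet_singleton _))

/-- the block sum is independent of the next increment. -/
lemma indep_block {Ω : Type*} [MeasurableSpace Ω] (P : Measure Ω)
    (B : ℕ → ℕ → Ω → ℕ) (hBm : ∀ n i, Measurable (B n i))
    (hBindep : iIndepFun (fun p : ℕ × ℕ => B p.1 p.2) P)
    (n o c : ℕ) :
    IndepFun (fun ω => ∑ i ∈ Finset.Ico o (o + c), B n i ω) (B n (o + c)) P := by
  have hinj : Function.Injective (fun i : ℕ => ((n, i) : ℕ × ℕ)) := by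
    intro a b h
    simpa using h
  have hnot : ((n, o + c) : ℕ × ℕ) ∉ (Finset.Ico o (o + c)).image (fun i => ((n, i) : ℕ × ℕ)) := by
    simp
  have h := hBindep.indepFun_finsetSum_of_notMem (fun p => hBm p.1 p.2) hnot
  have heq : (∑ p ∈ (Finset.Ico o (o + c)).image (fun i => ((n, i) : ℕ × ℕ)),
      (fun q : ℕ × ℕ => B q.1 q.2) p) = fun ω => ∑ i ∈ Finset.Ico o (o + c), B n i ω := by
    funext ω
    rw [Finset.sum_apply]
    rw [Finset.sum_image (fun a _ b _ h => hinj h)]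
  rwa [heq] at h

/-- translation invariance of the pmf of block sums. -/
lemma trans_pmf {Ω : Type*} [MeasurableSpace Ω] (P : Measure Ω)
    (B : ℕ → ℕ → Ω → ℕ) (hBm : ∀ n i, Measurable (B n i))
    (hBindep : iIndepFun (fun p : ℕ × ℕ => B p.1 p.2) P)
    (ν : ℕ → Measure ℕ) (hBd : ∀ n i, Measure.map (B n i) P = ν n)
    (n : ℕ) : ∀ c o t : ℕ,
    P {ω | ∑ i ∈ Finset.Ico o (o + c), B n i ω = t}
      = P {ω | ∑ i ∈ Finset.Ico 0 (0 + c), B n i ω = t} := by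
  intro c
  induction c with
  | zero => intro o t; simp
  | succ c ih =>
    intro o t
    have hL : ∀ o' : ℕ, {ω | ∑ i ∈ Finset.Ico o' (o' + (c+1)), B n i ω = t}
        = {ω | (∑ i ∈ Finset.Ico o' (o' + c), B n i ω) + B n (o' + c) ω = t} := by
      intro o'
      ext ω
      rw [Set.mem_setOf_eq, Set.mem_setOf_eq, ← Nat.add_assoc,
        Finset.sum_Ico_succ_top (Nat.le_add_right o' c)]
    have hSm : ∀ o' : ℕ, Measurable (fun ω => ∑ i ∈ Finset.Ico o' (o' + c), B n i ω) :=
      fun o' => Finset.measurable_sum _ (fun i _ => hBm n i)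
    rw [hL o, hL 0,
      add_pmf P B hBm ν hBd (hSm o) (indep_block P B hBm hBindep n o c) t,
      add_pmf P B hBm ν hBd (hSm 0) (indep_block P B hBm hBindep n 0 c) t]
    refine Finset.sum_congr rfl (fun a _ => ?_)
    rw [ih o a]

/-- distributions agree on all sets whenever the pmfs agree. -/
lemma measure_comp_eq {Ω : Type*} [MeasurableSpace Ω] (P : Measure Ω) {f g : Ω → ℕ}
    (hf : Measurable f) (hg : Measurable g)
    (hpmf : ∀ t, P {ω | f ω = t} = P {ω | g ω = t}) (s : Set ℕ) :
    P {ω | f ω ∈ s} = P {ω | g ω ∈ s} := by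
  classical
  have hsplit : ∀ (h : Ω → ℕ) (t : ℕ),
      {ω | h ω = t ∧ t ∈ s} = if t ∈ s then h ⁻¹' {t} else ∅ := by
    intro h t
    by_cases hts : t ∈ s <;> ext ω <;> simp [hts]
  have key : ∀ (h : Ω → ℕ), Measurable h → P {ω | h ω ∈ s}
      = ∑' t : ℕ, P {ω | h ω = t ∧ t ∈ s} := by
    intro h hh
    have hset : {ω | h ω ∈ s} = ⋃ t : ℕ, {ω | h ω = t ∧ t ∈ s} := by
      ext ω
      simp only [Set.mem_setOf_eq, Set.mem_iUnion]
      exact ⟨fun hs => ⟨h ω, rfl, hs⟩, fun ⟨t, ht, hts⟩ => ht ▸ hts⟩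
    rw [hset, measure_iUnion]
    · intro a b hab
      refine Set.disjoint_left.2 (fun ω hωa hωb => hab ?_)
      rw [← hωa.1, ← hωb.1]
    · intro t
      rw [hsplit h t]
      by_cases hts : t ∈ s
      · rw [if_pos hts]; exact hh (measurableSet_singleton t)
      · rw [if_neg hts]; exact MeasurableSet.empty
  rw [key f hf, key g hg]
  refine tsum_congr (fun t => ?_)
  rw [hsplit f t, hsplit g t]
  by_cases hts : t ∈ s
  · rw [if_pos hts, if_pos hts]
    exact hpmf t
  · rw [if_neg hts, if_neg hts]

end Stmt17Aux

namespace Stmt17Aux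

set_option maxHeartbeats 2000000 in
lemma bv_step {Ω : Type*} [MeasurableSpace Ω] (P : Measure Ω) [IsProbabilityMeasure P]
    (B : ℕ → ℕ → Ω → ℕ) (hBm : ∀ n i, Measurable (B n i))
    (hBindep : iIndepFun (fun p : ℕ × ℕ => B p.1 p.2) P)
    (ν : ℕ → Measure ℕ) (hBd : ∀ n i, Measure.map (B n i) P = ν n)
    (n j m : ℕ) :
    P {ω | BV B (n+1) ω j = m}
      = ∑' c : ℕ, P {ω | BV B n ω j = c}
          * P {ω | max (∑ i ∈ Finset.range c, B n i ω) 1 = m} := by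
  classical
  set W : Ω → ℕ × ℕ := fun ω => (∑ k ∈ Finset.range j, BV B n ω k, BV B n ω j) with hW
  have hBVmeas : ∀ j', Measurable fun ω => BV B n ω j' :=
    measurable_BV B n (fun m i _ => hBm m i)
  have hWmeas : Measurable W :=
    (Finset.measurable_sum _ fun k _ => hBVmeas k).prodMk (hBVmeas j)
  set E : ℕ × ℕ → Set Ω :=
    fun p => {ω | max (∑ i ∈ Finset.Ico p.1 (p.1 + p.2), B n i ω) 1 = m} with hE
  have hEmeas : ∀ p, MeasurableSet (E p) := fun p =>
    ((Finset.measurable_sum _ fun i _ => hBm n i).max measurable_const)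
      (measurableSet_singleton m)
  -- decomposition of the event according to the value of W
  have hset : {ω | BV B (n+1) ω j = m} = ⋃ p : ℕ × ℕ, W ⁻¹' {p} ∩ E p := by
    ext ω
    simp only [Set.mem_iUnion, Set.mem_inter_iff, Set.mem_preimage, Set.mem_singleton_iff,
      Set.mem_setOf_eq]
    constructor
    · intro h
      exact ⟨W ω, rfl, h⟩
    · rintro ⟨p, rfl, h⟩
      exact h
  -- independence of past and present increments
  have hd : Disjoint {q : ℕ × ℕ | q.1 = n} {q : ℕ × ℕ | q.1 ≠ n} := by
    rw [Set.disjoint_left]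
    exact fun q hq hq' => hq' hq
  have hIndepBig := indep_iSup_of_disjoint
    (m := fun q : ℕ × ℕ => MeasurableSpace.comap (B q.1 q.2) inferInstance)
    (fun q => (hBm q.1 q.2).comap_le) hBindep.iIndep hd
  have hWmeas' : Measurable[⨆ q ∈ {q : ℕ × ℕ | q.1 ≠ n},
      MeasurableSpace.comap (B q.1 q.2) inferInstance] W := by
    have hB' : ∀ m i, m < n → Measurable[⨆ q ∈ {q : ℕ × ℕ | q.1 ≠ n},
        MeasurableSpace.comap (B q.1 q.2) inferInstance] (B m i) := by
      intro m i hm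
      refine measurable_iff_comap_le.2 ?_
      exact le_iSup₂ (f := fun (q : ℕ × ℕ) (_ : q ∈ {q : ℕ × ℕ | q.1 ≠ n}) =>
        MeasurableSpace.comap (B q.1 q.2) inferInstance) (m, i) (Nat.ne_of_lt hm)
    exact (Finset.measurable_sum _ fun k _ => measurable_BV B n hB' k).prodMk
      (measurable_BV B n hB' j)
  have hEmeas' : ∀ p, MeasurableSet[⨆ q ∈ {q : ℕ × ℕ | q.1 = n},
      MeasurableSpace.comap (B q.1 q.2) inferInstance] (E p) := by
    intro p
    have hB' : ∀ i, Measurable[⨆ q ∈ {q : ℕ × ℕ | q.1 = n},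
        MeasurableSpace.comap (B q.1 q.2) inferInstance] (B n i) := by
      intro i
      refine measurable_iff_comap_le.2 ?_
      exact le_iSup₂ (f := fun (q : ℕ × ℕ) (_ : q ∈ {q : ℕ × ℕ | q.1 = n}) =>
        MeasurableSpace.comap (B q.1 q.2) inferInstance) (n, i) rfl
    exact ((Finset.measurable_sum _ fun i _ => hB' i).max measurable_const)
      (measurableSet_singleton m)
  have key : ∀ p, P (W ⁻¹' {p} ∩ E p) = P (W ⁻¹' {p}) * P (E p) := by
    intro p
    have := (Indep_iff _ _ P).1 hIndepBig (E p) (W ⁻¹' {p}) (hEmeas' p)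
      (hWmeas' (measurableSet_singleton p))
    rw [Set.inter_comm] at this
    rw [this, mul_comm]
  -- identify the law of the block sum
  have hEeq : ∀ p : ℕ × ℕ,
      P (E p) = P {ω | max (∑ i ∈ Finset.range p.2, B n i ω) 1 = m} := by
    intro p
    have hpmf : ∀ s : ℕ, P {ω | ∑ i ∈ Finset.Ico p.1 (p.1 + p.2), B n i ω = s}
        = P {ω | ∑ i ∈ Finset.range p.2, B n i ω = s} := by
      intro s
      have := trans_pmf P B hBm hBindep ν hBd n p.2 p.1 s
      simpa [Nat.zero_add, ← Finset.range_eq_Ico] using this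
    exact measure_comp_eq P (Finset.measurable_sum _ fun i _ => hBm n i)
      (Finset.measurable_sum _ fun i _ => hBm n i) hpmf {x | max x 1 = m}
  -- summing over offsets
  have hWsum : ∀ c : ℕ, (∑' o : ℕ, P (W ⁻¹' {(o, c)})) = P {ω | BV B n ω j = c} := by
    intro c
    rw [← measure_iUnion]
    · congr 1
      ext ω
      simp only [Set.mem_iUnion, Set.mem_preimage, Set.mem_singleton_iff, Set.mem_setOf_eq,
        Prod.mk.injEq, Prod.ext_iff]
      constructor
      · rintro ⟨o, _, h2⟩
        exact h2
      · intro h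
        exact ⟨∑ k ∈ Finset.range j, BV B n ω k, rfl, h⟩
    · intro a b hab
      refine Set.disjoint_left.2 (fun ω hωa hωb => hab ?_)
      simp only [Set.mem_preimage, Set.mem_singleton_iff] at hωa hωb
      have := hωa.symm.trans hωb
      simpa using (congrArg Prod.fst this)
    · intro o
      exact hWmeas (measurableSet_singleton _)
  calc P {ω | BV B (n+1) ω j = m}
      = ∑' p : ℕ × ℕ, P (W ⁻¹' {p} ∩ E p) := by
        rw [hset]
        refine measure_iUnion ?_ (fun p => (hWmeas (measurableSet_singleton p)).inter (hEmeas p))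
        intro a b hab
        refine Set.disjoint_left.2 (fun ω hωa hωb => hab ?_)
        exact hωa.1.symm.trans hωb.1
    _ = ∑' p : ℕ × ℕ, P (W ⁻¹' {p})
          * P {ω | max (∑ i ∈ Finset.range p.2, B n i ω) 1 = m} := by
        refine tsum_congr (fun p => ?_)
        rw [key p, hEeq p]
    _ = ∑' o : ℕ, ∑' c : ℕ, P (W ⁻¹' {(o, c)})
          * P {ω | max (∑ i ∈ Finset.range c, B n i ω) 1 = m} := ENNReal.tsum_prod'
    _ = ∑' c : ℕ, ∑' o : ℕ, P (W ⁻¹' {(o, c)})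
          * P {ω | max (∑ i ∈ Finset.range c, B n i ω) 1 = m} := ENNReal.tsum_comm
    _ = ∑' c : ℕ, (∑' o : ℕ, P (W ⁻¹' {(o, c)}))
          * P {ω | max (∑ i ∈ Finset.range c, B n i ω) 1 = m} := by
        refine tsum_congr (fun c => ?_)
        rw [ENNReal.tsum_mul_right]
    _ = ∑' c : ℕ, P {ω | BV B n ω j = c}
          * P {ω | max (∑ i ∈ Finset.range c, B n i ω) 1 = m} := by
        refine tsum_congr (fun c => ?_)
        rw [hWsum c]

lemma bv_same {Ω : Type*} [MeasurableSpace Ω] (P : Measure Ω) [IsProbabilityMeasure P]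
    (B : ℕ → ℕ → Ω → ℕ) (hBm : ∀ n i, Measurable (B n i))
    (hBindep : iIndepFun (fun p : ℕ × ℕ => B p.1 p.2) P)
    (ν : ℕ → Measure ℕ) (hBd : ∀ n i, Measure.map (B n i) P = ν n) :
    ∀ n j m : ℕ, P {ω | BV B n ω j = m} = P {ω | BV B n ω 0 = m} := by
  intro n
  induction n with
  | zero => intro j m; rfl
  | succ n ih =>
    intro j m
    rw [bv_step P B hBm hBindep ν hBd n j m, bv_step P B hBm hBindep ν hBd n 0 m]
    exact tsum_congr (fun c => by rw [ih j c])

end Stmt17Aux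

namespace Stmt17Aux

lemma bv_tail_eq {Ω : Type*} [MeasurableSpace Ω] (P : Measure Ω) [IsProbabilityMeasure P]
    (B : ℕ → ℕ → Ω → ℕ) (hBm : ∀ n i, Measurable (B n i))
    (hBindep : iIndepFun (fun p : ℕ × ℕ => B p.1 p.2) P)
    (ν : ℕ → Measure ℕ) (hBd : ∀ n i, Measure.map (B n i) P = ν n)
    (n j : ℕ) (x : ℝ) :
    P {ω | x < (BV B n ω j : ℝ)} = P {ω | x < (BV B n ω 0 : ℝ)} := by
  have hBVmeas : ∀ j', Measurable fun ω => BV B n ω j' :=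
    measurable_BV B n (fun m i _ => hBm m i)
  exact measure_comp_eq P (hBVmeas j) (hBVmeas 0)
    (fun t => bv_same P B hBm hBindep ν hBd n j t) {m : ℕ | x < (m : ℝ)}

end Stmt17Aux

open Stmt17Aux
theorem stmt17 {Ω : Type*} [MeasurableSpace Ω] (P : Measure Ω) [IsProbabilityMeasure P]
    (B : ℕ → ℕ → Ω → ℕ) (hBm : ∀ n i, Measurable (B n i))
    (hBindep : iIndepFun (fun p : ℕ × ℕ => B p.1 p.2) P)
    (ν : ℕ → Measure ℕ) (hBd : ∀ n i, Measure.map (B n i) P = ν n)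
    (y l : ℕ) (hy : 1 ≤ y) (hl : 1 ≤ l)
    (Λy Λl : ℕ → Ω → ℕ) (h0y : ∀ ω, Λy 0 ω = y) (h0l : ∀ ω, Λl 0 ω = l)
    (hrecy : ∀ (n : ℕ) ω, Λy (n + 1) ω = max (∑ i ∈ Finset.range (Λy n ω), B n i ω) y)
    (hrecl : ∀ (n : ℕ) ω, Λl (n + 1) ω = max (∑ i ∈ Finset.range (Λl n ω), B n i ω) l) :
    ∀ (n : ℕ) (x : ℝ),
      P {ω | (y : ℝ) * x < (Λy n ω : ℝ)} / (y : ENNReal) ≤ P {ω | x < (Λl n ω : ℝ)} := by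
  intro n x
  have hchain : P {ω | (y : ℝ) * x < (Λy n ω : ℝ)}
      ≤ P {ω | x < (Λl n ω : ℝ)} * (y : ENNReal) := by
    calc P {ω | (y : ℝ) * x < (Λy n ω : ℝ)}
        ≤ P (⋃ j ∈ Finset.range y, {ω | x < (BV B n ω j : ℝ)}) := by
          apply measure_mono
          intro ω hω
          simp only [Set.mem_setOf_eq] at hω
          by_contra hnot
          simp only [Set.mem_iUnion, Set.mem_setOf_eq, not_exists, not_lt] at hnot
          have hdom := dom_y B y Λy h0y hrecy n ω
          have hcast : (Λy n ω : ℝ) ≤ ∑ j ∈ Finset.range y, (BV B n ω j : ℝ) := by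
            rw [← Nat.cast_sum]
            exact_mod_cast hdom
          have hsum : ∑ j ∈ Finset.range y, (BV B n ω j : ℝ)
              ≤ ∑ _j ∈ Finset.range y, x :=
            Finset.sum_le_sum (fun j hj => hnot j hj)
          rw [Finset.sum_const, Finset.card_range, nsmul_eq_mul] at hsum
          exact absurd (lt_of_lt_of_le hω (hcast.trans hsum)) (lt_irrefl _)
      _ ≤ ∑ j ∈ Finset.range y, P {ω | x < (BV B n ω j : ℝ)} :=
          measure_biUnion_finset_le _ _
      _ = ∑ _j ∈ Finset.range y, P {ω | x < (BV B n ω 0 : ℝ)} :=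
          Finset.sum_congr rfl (fun j _ => bv_tail_eq P B hBm hBindep ν hBd n j x)
      _ ≤ ∑ _j ∈ Finset.range y, P {ω | x < (Λl n ω : ℝ)} := by
          refine Finset.sum_le_sum (fun j _ => measure_mono ?_)
          intro ω hω
          simp only [Set.mem_setOf_eq] at hω ⊢
          refine lt_of_lt_of_le hω ?_
          exact_mod_cast dom_l B l hl Λl h0l hrecl n ω
      _ = P {ω | x < (Λl n ω : ℝ)} * (y : ENNReal) := by
          rw [Finset.sum_const, Finset.card_range, nsmul_eq_mul, mul_comm]
  rw [ENNReal.div_le_iff_le_mul]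
  · exact hchain
  · refine Or.inl ?_; exact_mod_cast Nat.one_le_iff_ne_zero.1 hy
  · exact Or.inl (ENNReal.natCast_ne_top y)
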